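/- If (f,a,b) is not ε-linear for a 1-Lipschitz function f : [a,b] → ℝ with f(b) ≥ f(a), then, possibly after replacing f by x ↦ −f(a+b−x), there exists a subinterval [a',b'] ⊆ [a,b] with b' − a' ≥ ε(b − a) such that s_f(a',b') ≥ s_f(a,b) + ε. -/

import Mathlib

open Set

/-- If `(f,a,b)` is not `ε`-linear for a 1-Lipschitz `f : [a,b] → ℝ` with
`f b ≥ f a`, then, possibly after replacing `f` by the flip `g x = -f (a + b - x)`, there is
a subinterval `[a',b'] ⊆ [a,b]` with `b' - a' ≥ ε (b - a)` and slope
`s_f(a',b') ≥ s_f(a,b) + ε`. -/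
theorem slope_increase_of_not_linear (ε a b : ℝ) (hε : 0 < ε) (hab : a < b) (f : ℝ → ℝ)
    (hf : LipschitzOnWith 1 f (Set.Icc a b)) (hfab : f a ≤ f b)
    (hnotlin : ¬ ∀ x ∈ Set.Icc a b,
      |f x - (f a + (f b - f a) / (b - a) * (x - a))| ≤ ε * (b - a)) :
    ∃ a' b' : ℝ, a ≤ a' ∧ a' < b' ∧ b' ≤ b ∧ ε * (b - a) ≤ b' - a' ∧
      ((f b - f a) / (b - a) + ε ≤ (f b' - f a') / (b' - a') ∨
       (f b - f a) / (b - a) + ε ≤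
         ((-f (a + b - b')) - (-f (a + b - a'))) / (b' - a')) := by
  push_neg at hnotlin
  obtain ⟨x, hx, hxabs⟩ := hnotlin
  obtain ⟨hax, hxb⟩ := hx
  have hba : (0:ℝ) < b - a := by linarith
  set s := (f b - f a) / (b - a) with hsdef
  have hs : 0 ≤ s := div_nonneg (by linarith) hba.le
  have hfb : f b - f a = s * (b - a) := by
    rw [hsdef, div_mul_cancel₀ _ hba.ne']
  rcases lt_abs.mp hxabs with h1 | h1
  · -- f x above the line; take [a, x]
    have hsx : s * (x - a) ≥ 0 := mul_nonneg hs (by linarith)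
    have hfx : ε * (b - a) < f x - f a := by linarith
    have hlip : f x - f a ≤ x - a := by
      have := hf.dist_le_mul x ⟨hax, hxb⟩ a ⟨le_refl a, hab.le⟩
      rw [Real.dist_eq, Real.dist_eq] at this
      have h2 := le_trans (le_abs_self _) this
      simpa [abs_of_nonneg (show (0:ℝ) ≤ x - a by linarith)] using h2
    have hxa : ε * (b - a) ≤ x - a := by
      have : 0 < ε * (b - a) := mul_pos hε hba
      linarith
    have haxlt : a < x := by nlinarith [mul_pos hε hba]
    refine ⟨a, x, le_refl a, haxlt, hxb, hxa, Or.inl ?_⟩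
    rw [le_div_iff₀ (by linarith : (0:ℝ) < x - a)]
    nlinarith
  · -- f x below the line; take [x, b]
    have hkey : ε * (b - a) < f a + s * (x - a) - f x := by linarith
    have hfbx : f b - f x = s * (b - x) + (f a + s * (x - a) - f x) := by
      have : s * (b - x) + s * (x - a) = s * (b - a) := by ring
      linarith
    have hsbx : 0 ≤ s * (b - x) := mul_nonneg hs (by linarith)
    have hlip : f b - f x ≤ b - x := by
      have := hf.dist_le_mul b ⟨hab.le, le_refl b⟩ x ⟨hax, hxb⟩
      rw [Real.dist_eq, Real.dist_eq] at this
      have h2 := le_trans (le_abs_self _) this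
      simpa [abs_of_nonneg (show (0:ℝ) ≤ b - x by linarith)] using h2
    have hxa : ε * (b - a) ≤ b - x := by
      have : 0 < ε * (b - a) := mul_pos hε hba
      linarith
    have hxblt : x < b := by nlinarith [mul_pos hε hba]
    refine ⟨x, b, hax, hxblt, le_refl b, hxa, Or.inl ?_⟩
    rw [le_div_iff₀ (by linarith : (0:ℝ) < b - x)]
    nlinarith
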